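/- Assume n ≥ 3. Then (∇_xω)(y,z) = −(1/(2(n−1)))·U(x,y,z) for all x, y, z ∈ g (the structure belongs to the Gray-Hervella class W₄) if and only if v₀ = 0, w₀ = 0, D_s = (Tr D/(2(n−1)))·Id_a and D_a∘J' = J'∘D_a (equivalently, D − (Tr D/(2(n−1)))·Id_a ∈ u(n−1)). -/

import Mathlib

open scoped BigOperators
open Matrix

noncomputable section

/-- The underlying `2n`-dimensional real vector space `ℝ^{2n}`, whose standard basis
plays the role of the orthonormal basis `e₀, e₁, …, e_{2n-1}`. -/
abbrev G (n : ℕ) := Fin (2*n) → ℝ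

/-- The inner product `⟨·,·⟩` making the standard basis orthonormal. -/
def inn {n : ℕ} (x y : G n) : ℝ := ∑ i, x i * y i

/-- The standard basis vector `e k` (indexed by a natural number `k`). -/
def E (n : ℕ) (k : ℕ) : G n := fun i => if (i : ℕ) = k then 1 else 0

/-- Membership in `a = span{e₂, …, e_{2n-1}}`. -/
def inA {n : ℕ} (x : G n) : Prop := ∀ i : Fin (2*n), (i : ℕ) < 2 → x i = 0

/-- The orthogonal almost complex structure `J e_{2i} = e_{2i+1}`, `J e_{2i+1} = -e_{2i}`. -/
def Jm (n : ℕ) : Matrix (Fin (2*n)) (Fin (2*n)) ℝ :=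
  Matrix.of fun k l =>
    if (k : ℕ) = (l : ℕ) + 1 ∧ Even (l : ℕ) then (1 : ℝ)
    else if (l : ℕ) = (k : ℕ) + 1 ∧ Even (k : ℕ) then -1 else 0

/-- `D` is (the extension by zero of) an endomorphism of `a`: it vanishes on
`span{e₀, e₁}` and takes values orthogonal to `span{e₀, e₁}`. -/
def DinA {n : ℕ} (D : Matrix (Fin (2*n)) (Fin (2*n)) ℝ) : Prop :=
  ∀ k l : Fin (2*n), ((k : ℕ) < 2 ∨ (l : ℕ) < 2) → D k l = 0

/-- The matrix of `L` determined by the data `μ, v₀, w₀, D`, i.e.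
`L e₀ = 0`, `L e₁ = μ e₁ + v₀` and `L x = ⟨w₀, x⟩ e₁ + D x` for `x ∈ a`
(for `v₀, w₀ ∈ a` and `D` an endomorphism of `a`). -/
def Lm {n : ℕ} (μ : ℝ) (v₀ w₀ : G n) (D : Matrix (Fin (2*n)) (Fin (2*n)) ℝ) :
    Matrix (Fin (2*n)) (Fin (2*n)) ℝ :=
  Matrix.of fun k l =>
    (if (k : ℕ) = 1 ∧ (l : ℕ) = 1 then μ else 0)
      + (if (l : ℕ) = 1 then v₀ k else 0)
      + (if (k : ℕ) = 1 then w₀ l else 0)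
      + D k l

/-- The Lie bracket of the almost abelian Lie algebra `g = ℝ e₀ ⋉_L u`:
`[e₀, u] = L u` for `u ∈ u = span{e₁, …, e_{2n-1}}` and `[u, v] = 0` for `u, v ∈ u`. -/
def br {n : ℕ} (L : Matrix (Fin (2*n)) (Fin (2*n)) ℝ) (x y : G n) : G n :=
  inn x (E n 0) • L.mulVec y - inn y (E n 0) • L.mulVec x

/-- `nabla` is the Levi-Civita connection of `⟨·,·⟩`, i.e. it satisfies the Koszul
formula `2⟨∇_x y, z⟩ = ⟨[x,y],z⟩ − ⟨[y,z],x⟩ + ⟨[z,x],y⟩`. -/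
def Koszul {n : ℕ} (L : Matrix (Fin (2*n)) (Fin (2*n)) ℝ) (nabla : G n → G n → G n) : Prop :=
  ∀ x y z : G n, 2 * inn (nabla x y) z
    = inn (br L x y) z - inn (br L y z) x + inn (br L z x) y

/-- `(∇_y J)(x) = ∇_y (Jx) − J ∇_y x`. -/
def covJ {n : ℕ} (nabla : G n → G n → G n) (y x : G n) : G n :=
  nabla y ((Jm n).mulVec x) - (Jm n).mulVec (nabla y x)

/-- The rough Laplacian
`(∇*∇J)(x) = Σ_i ((∇_{e_i}(∇_{e_i}J))(x) − (∇_{∇_{e_i}e_i} J)(x))`. -/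
def roughLap {n : ℕ} (nabla : G n → G n → G n) (x : G n) : G n :=
  ∑ i : Fin (2*n),
    (nabla (E n i.val) (covJ nabla (E n i.val) x)
      - covJ nabla (E n i.val) (nabla (E n i.val) x)
      - covJ nabla (nabla (E n i.val) (E n i.val)) x)

/-- `J` is harmonic: `J ∘ (∇*∇J) = (∇*∇J) ∘ J`. -/
def Harmonic {n : ℕ} (nabla : G n → G n → G n) : Prop :=
  ∀ x : G n, (Jm n).mulVec (roughLap nabla x) = roughLap nabla ((Jm n).mulVec x)

/-- Symmetric part of a matrix. -/
def symPart {n : ℕ} (M : Matrix (Fin (2*n)) (Fin (2*n)) ℝ) :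
    Matrix (Fin (2*n)) (Fin (2*n)) ℝ := (1/2 : ℝ) • (M + Mᵀ)

/-- Skew-symmetric part of a matrix. -/
def skewPart {n : ℕ} (M : Matrix (Fin (2*n)) (Fin (2*n)) ℝ) :
    Matrix (Fin (2*n)) (Fin (2*n)) ℝ := (1/2 : ℝ) • (M - Mᵀ)

/-- `γ = (v₀ + w₀)/2`. -/
def gam {n : ℕ} (v₀ w₀ : G n) : G n := (1/2 : ℝ) • (v₀ + w₀)

/-- `ρ = (v₀ − w₀)/2`. -/
def rho {n : ℕ} (v₀ w₀ : G n) : G n := (1/2 : ℝ) • (v₀ - w₀)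

/-- The fundamental 2-form `ω(x,y) = ⟨Jx, y⟩`. -/
def om {n : ℕ} (x y : G n) : ℝ := inn ((Jm n).mulVec x) y

/-- `(∇_x ω)(y,z) = −ω(∇_x y, z) − ω(y, ∇_x z)`. -/
def nablaOm {n : ℕ} (nabla : G n → G n → G n) (x y z : G n) : ℝ :=
  - om (nabla x y) z - om y (nabla x z)

/-- `dω(x,y,z) = −ω([x,y],z) − ω([y,z],x) − ω([z,x],y)`. -/
def dOm {n : ℕ} (L : Matrix (Fin (2*n)) (Fin (2*n)) ℝ) (x y z : G n) : ℝ :=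
  - om (br L x y) z - om (br L y z) x - om (br L z x) y

/-- The codifferential `δω(x) = −Σ_i (∇_{e_i}ω)(e_i, x)`. -/
def deltaOm {n : ℕ} (nabla : G n → G n → G n) (x : G n) : ℝ :=
  - ∑ i : Fin (2*n), nablaOm nabla (E n i.val) (E n i.val) x

/-- The Nijenhuis tensor `N(x,y) = [x,y] + J([Jx,y] + [x,Jy]) − [Jx,Jy]`. -/
def Nij {n : ℕ} (L : Matrix (Fin (2*n)) (Fin (2*n)) ℝ) (x y : G n) : G n :=
  br L x y
    + (Jm n).mulVec (br L ((Jm n).mulVec x) y + br L x ((Jm n).mulVec y))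
    - br L ((Jm n).mulVec x) ((Jm n).mulVec y)

/-- `T⁻(x,y,z) = (∇_x ω)(y,z) − (∇_{Jx} ω)(Jy,z)`. -/
def Tminus {n : ℕ} (nabla : G n → G n → G n) (x y z : G n) : ℝ :=
  nablaOm nabla x y z - nablaOm nabla ((Jm n).mulVec x) ((Jm n).mulVec y) z

/-- `T⁺(x,y,z) = (∇_x ω)(y,z) + (∇_{Jx} ω)(Jy,z)`. -/
def Tplus {n : ℕ} (nabla : G n → G n → G n) (x y z : G n) : ℝ :=
  nablaOm nabla x y z + nablaOm nabla ((Jm n).mulVec x) ((Jm n).mulVec y) z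

/-- `U(x,y,z) = ⟨x,y⟩δω(z) − ⟨x,z⟩δω(y) − ⟨x,Jy⟩δω(Jz) + ⟨x,Jz⟩δω(Jy)`. -/
def Uten {n : ℕ} (nabla : G n → G n → G n) (x y z : G n) : ℝ :=
  inn x y * deltaOm nabla z - inn x z * deltaOm nabla y
    - inn x ((Jm n).mulVec y) * deltaOm nabla ((Jm n).mulVec z)
    + inn x ((Jm n).mulVec z) * deltaOm nabla ((Jm n).mulVec y)

/-- The Lee form `θ(x) = −(1/(n−1)) δω(Jx)`. -/
def Lee {n : ℕ} (nabla : G n → G n → G n) (x : G n) : ℝ :=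
  -(1/((n : ℝ) - 1)) * deltaOm nabla ((Jm n).mulVec x)

/-- The identity of `a`, extended by zero to `g`. -/
def Ia (n : ℕ) : Matrix (Fin (2*n)) (Fin (2*n)) ℝ :=
  Matrix.of fun k l => if k = l ∧ 2 ≤ (k : ℕ) then (1 : ℝ) else 0


section AuxLemmas

variable {n : ℕ}

lemma inn_eq (x y : G n) : inn x y = x ⬝ᵥ y := rfl

lemma E_apply (i k : Fin (2*n)) : E n (i:ℕ) k = if k = i then (1:ℝ) else 0 := by
  simp [E, Fin.ext_iff]

lemma dotE (x : G n) (i : Fin (2*n)) : inn x (E n (i:ℕ)) = x i := by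
  rw [inn]
  rw [Finset.sum_eq_single i]
  · simp [E_apply]
  · intro b _ hb; simp [E_apply, hb]
  · simp
lemma Edot (x : G n) (i : Fin (2*n)) : inn (E n (i:ℕ)) x = x i := by
  rw [inn_eq, dotProduct_comm, ← inn_eq, dotE]

lemma mulVecE (M : Matrix (Fin (2*n)) (Fin (2*n)) ℝ) (i : Fin (2*n)) :
    M.mulVec (E n (i:ℕ)) = fun k => M k i := by
  funext k
  rw [Matrix.mulVec, dotProduct, Finset.sum_eq_single i]
  · simp [E_apply]
  · intro b _ hb; simp [E_apply, hb]
  · simp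

lemma Jm_anti (k l : Fin (2*n)) : Jm n l k = - Jm n k l := by
  simp only [Jm, Matrix.of_apply]
  split_ifs <;>
    first
      | (next h h' => (have := h.1; have := h'.1; omega))
      | norm_num

lemma Jm_transpose : (Jm n)ᵀ = -(Jm n) := by
  ext k l
  rw [Matrix.transpose_apply, Jm_anti]
  rfl

lemma dotJ_swap (x y : G n) : (Jm n).mulVec x ⬝ᵥ y = -(x ⬝ᵥ (Jm n).mulVec y) := by
  rw [dotProduct_comm, Matrix.dotProduct_mulVec, ← Matrix.mulVec_transpose,
    Jm_transpose, Matrix.neg_mulVec, neg_dotProduct, dotProduct_comm]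

lemma innJ_swap (x y : G n) : inn ((Jm n).mulVec x) y = - inn x ((Jm n).mulVec y) := by
  rw [inn_eq, inn_eq, dotJ_swap]

/-- index 0 -/
def i0 (h1 : 1 < 2*n) : Fin (2*n) := ⟨0, by omega⟩
/-- index 1 -/
def i1 (h1 : 1 < 2*n) : Fin (2*n) := ⟨1, h1⟩

lemma J_col0 (h1 : 1 < 2*n) : (Jm n).mulVec (E n 0) = E n 1 := by
  have h : E n (0:ℕ) = E n ((i0 h1 : Fin (2*n)) : ℕ) := rfl
  rw [h, mulVecE]
  funext k
  show Jm n k (i0 h1) = _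
  simp only [Jm, Matrix.of_apply, E, i0]
  split_ifs <;> first | rfl | omega | (exfalso; omega) | simp_all

lemma J_col1 (h1 : 1 < 2*n) : (Jm n).mulVec (E n 1) = -(E n 0) := by
  have h : E n (1:ℕ) = E n ((i1 h1 : Fin (2*n)) : ℕ) := rfl
  rw [h, mulVecE]
  funext k
  show Jm n k (i1 h1) = _
  simp only [Jm, Matrix.of_apply, E, i1, Pi.neg_apply]
  split_ifs <;> first | rfl | omega | (exfalso; omega) | simp_all

lemma J_app0 (h1 : 1 < 2*n) (z : G n) : (Jm n).mulVec z (i0 h1) = - z (i1 h1) := by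
  have e0 : ((i0 h1):ℕ) = 0 := rfl
  have e1 : ((i1 h1):ℕ) = 1 := rfl
  rw [Matrix.mulVec, dotProduct, Finset.sum_eq_single (i1 h1)]
  · have h : Jm n (i0 h1) (i1 h1) = -1 := by
      simp only [Jm, Matrix.of_apply, e0, e1]
      norm_num
    rw [h]; ring
  · intro b _ hb
    have hb' : (b:ℕ) ≠ 1 := fun hc => hb (by rw [Fin.ext_iff, hc, e1])
    have h : Jm n (i0 h1) b = 0 := by
      simp only [Jm, Matrix.of_apply, e0]
      rw [if_neg (fun hc => absurd hc.1 (by omega)),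
        if_neg (fun hc => hb' (by have := hc.1; omega))]
    rw [h]; ring
  · simp

lemma J_app1 (h1 : 1 < 2*n) (z : G n) : (Jm n).mulVec z (i1 h1) = z (i0 h1) := by
  have e0 : ((i0 h1):ℕ) = 0 := rfl
  have e1 : ((i1 h1):ℕ) = 1 := rfl
  rw [Matrix.mulVec, dotProduct, Finset.sum_eq_single (i0 h1)]
  · have h : Jm n (i1 h1) (i0 h1) = 1 := by
      simp only [Jm, Matrix.of_apply, e0, e1]
      norm_num
    rw [h]; ring
  · intro b _ hb
    have hb' : (b:ℕ) ≠ 0 := fun hc => hb (by rw [Fin.ext_iff, hc, e0])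
    have h : Jm n (i1 h1) b = 0 := by
      simp only [Jm, Matrix.of_apply, e1]
      rw [if_neg (fun hc => hb' (by have := hc.1; omega)),
        if_neg (fun hc => absurd hc.2 (by decide))]
    rw [h]; ring
  · simp

lemma vecMulVec_mulVec' (a b u : G n) : (Matrix.vecMulVec a b).mulVec u = (b ⬝ᵥ u) • a := by
  funext k
  simp only [Matrix.mulVec, dotProduct, Matrix.vecMulVec_apply, Pi.smul_apply,
    smul_eq_mul]
  rw [Finset.sum_mul]
  exact Finset.sum_congr rfl fun l _ => by ring

lemma Lm_decomp (μ : ℝ) (v₀ w₀ : G n) (D : Matrix (Fin (2*n)) (Fin (2*n)) ℝ) :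
    Lm μ v₀ w₀ D = μ • Matrix.vecMulVec (E n 1) (E n 1) + Matrix.vecMulVec v₀ (E n 1)
      + Matrix.vecMulVec (E n 1) w₀ + D := by
  ext k l
  simp only [Lm, Matrix.of_apply, Matrix.add_apply, Matrix.smul_apply,
    Matrix.vecMulVec_apply, smul_eq_mul, E]
  by_cases hk : (k:ℕ) = 1 <;> by_cases hl : (l:ℕ) = 1 <;> simp [hk, hl]

lemma Lm_mulVec (μ : ℝ) (v₀ w₀ : G n) (D : Matrix (Fin (2*n)) (Fin (2*n)) ℝ) (u : G n) :
    (Lm μ v₀ w₀ D).mulVec u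
      = (μ * (E n 1 ⬝ᵥ u)) • E n 1 + (E n 1 ⬝ᵥ u) • v₀ + (w₀ ⬝ᵥ u) • E n 1 + D.mulVec u := by
  rw [Lm_decomp, Matrix.add_mulVec, Matrix.add_mulVec, Matrix.add_mulVec,
    Matrix.smul_mulVec, vecMulVec_mulVec', vecMulVec_mulVec', vecMulVec_mulVec',
    smul_smul]

lemma E1_dot (h1 : 1 < 2*n) (u : G n) : E n 1 ⬝ᵥ u = u (i1 h1) := by
  have h : E n (1:ℕ) = E n ((i1 h1 : Fin (2*n)) : ℕ) := rfl
  rw [h, ← inn_eq, Edot]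

lemma dot_E1 (h1 : 1 < 2*n) (u : G n) : u ⬝ᵥ E n 1 = u (i1 h1) := by
  rw [dotProduct_comm, E1_dot]

lemma pair_Lm (h1 : 1 < 2*n) (μ : ℝ) (v₀ w₀ : G n) (D : Matrix (Fin (2*n)) (Fin (2*n)) ℝ)
    (u v : G n) :
    inn ((Lm μ v₀ w₀ D).mulVec u) v
      = μ * u (i1 h1) * v (i1 h1) + u (i1 h1) * inn v₀ v
        + inn w₀ u * v (i1 h1) + inn (D.mulVec u) v := by
  rw [inn_eq, Lm_mulVec, add_dotProduct, add_dotProduct, add_dotProduct,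
    smul_dotProduct, smul_dotProduct, smul_dotProduct,
    E1_dot h1, E1_dot h1, inn_eq, inn_eq, inn_eq]
  simp only [smul_eq_mul]


lemma trace_vecMulVec' (a b : G n) : Matrix.trace (Matrix.vecMulVec a b) = a ⬝ᵥ b := by
  simp [Matrix.trace, Matrix.diag, Matrix.vecMulVec_apply, dotProduct]

lemma E1_at_i1 (h1 : 1 < 2*n) : E n 1 (i1 h1) = 1 := by
  simp [E, i1]

lemma E1_at_i0 (h1 : 1 < 2*n) : E n 1 (i0 h1) = 0 := by
  simp [E, i0]

lemma trace_Lm (h1 : 1 < 2*n) (μ : ℝ) (v₀ w₀ : G n) (D : Matrix (Fin (2*n)) (Fin (2*n)) ℝ)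
    (hv1 : v₀ (i1 h1) = 0) (hw1 : w₀ (i1 h1) = 0) :
    Matrix.trace (Lm μ v₀ w₀ D) = μ + Matrix.trace D := by
  rw [Lm_decomp, Matrix.trace_add, Matrix.trace_add, Matrix.trace_add, Matrix.trace_smul,
    trace_vecMulVec', trace_vecMulVec', trace_vecMulVec']
  simp [dot_E1 h1, E1_dot h1, E1_at_i1, hv1, hw1]

def Fq {n : ℕ} (L : Matrix (Fin (2*n)) (Fin (2*n)) ℝ) (x y z : G n) : ℝ :=
  inn (br L x y) z - inn (br L y z) x + inn (br L z x) y

lemma dot_E0 (h1 : 1 < 2*n) (u : G n) : inn u (E n 0) = u (i0 h1) := by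
  have h : E n (0:ℕ) = E n ((i0 h1 : Fin (2*n)) : ℕ) := rfl
  rw [h, dotE]

lemma br_dot (h1 : 1 < 2*n) (L : Matrix (Fin (2*n)) (Fin (2*n)) ℝ) (x y z : G n) :
    inn (br L x y) z
      = x (i0 h1) * inn (L.mulVec y) z - y (i0 h1) * inn (L.mulVec x) z := by
  rw [br, dot_E0 h1, dot_E0 h1, inn_eq, sub_dotProduct, smul_dotProduct,
    smul_dotProduct, inn_eq, inn_eq]
  simp only [smul_eq_mul]

lemma Fq_expand (h1 : 1 < 2*n) (L : Matrix (Fin (2*n)) (Fin (2*n)) ℝ) (x y z : G n) :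
    Fq L x y z
      = x (i0 h1) * inn (L.mulVec y) z - y (i0 h1) * inn (L.mulVec x) z
        - y (i0 h1) * inn (L.mulVec z) x + z (i0 h1) * inn (L.mulVec y) x
        + z (i0 h1) * inn (L.mulVec x) y - x (i0 h1) * inn (L.mulVec z) y := by
  rw [Fq, br_dot h1, br_dot h1, br_dot h1]
  ring

lemma nablaOm_Fq {L : Matrix (Fin (2*n)) (Fin (2*n)) ℝ} {nabla : G n → G n → G n}
    (hK : Koszul L nabla) (x y z : G n) :
    nablaOm nabla x y z
      = (Fq L x y ((Jm n).mulVec z) - Fq L x z ((Jm n).mulVec y)) / 2 := by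
  have h1 := hK x y ((Jm n).mulVec z)
  have h2 := hK x z ((Jm n).mulVec y)
  rw [nablaOm, om, om, innJ_swap (nabla x y) z]
  rw [inn_eq ((Jm n).mulVec y) (nabla x z), dotProduct_comm, ← inn_eq]
  show -(-inn (nabla x y) ((Jm n).mulVec z)) - inn (nabla x z) ((Jm n).mulVec y) = _
  rw [show Fq L x y ((Jm n).mulVec z) = inn (br L x y) ((Jm n).mulVec z)
      - inn (br L y ((Jm n).mulVec z)) x + inn (br L ((Jm n).mulVec z) x) y from rfl,
    show Fq L x z ((Jm n).mulVec y) = inn (br L x z) ((Jm n).mulVec y)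
      - inn (br L z ((Jm n).mulVec y)) x + inn (br L ((Jm n).mulVec y) x) z from rfl]
  linarith


lemma Drow_small {D : Matrix (Fin (2*n)) (Fin (2*n)) ℝ} (hD : DinA D) {k : Fin (2*n)}
    (hk : (k:ℕ) < 2) (u : G n) : D.mulVec u k = 0 := by
  rw [Matrix.mulVec, dotProduct]
  exact Finset.sum_eq_zero fun l _ => by rw [hD k l (Or.inl hk), zero_mul]

lemma D_mulVec_E1 {D : Matrix (Fin (2*n)) (Fin (2*n)) ℝ} (hD : DinA D) (h1 : 1 < 2*n) :
    D.mulVec (E n 1) = 0 := by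
  have h : E n (1:ℕ) = E n ((i1 h1 : Fin (2*n)) : ℕ) := rfl
  rw [h, mulVecE]
  funext k
  exact hD k (i1 h1) (Or.inr (by simp [i1]))

lemma Lrow0 (h1 : 1 < 2*n) {μ : ℝ} {v₀ w₀ : G n} {D : Matrix (Fin (2*n)) (Fin (2*n)) ℝ}
    (hv : inA v₀) (hD : DinA D) (u : G n) :
    (Lm μ v₀ w₀ D).mulVec u (i0 h1) = 0 := by
  rw [Lm_mulVec]
  simp only [Pi.add_apply, Pi.smul_apply, smul_eq_mul]
  rw [E1_at_i0 h1, hv (i0 h1) (by simp [i0]), Drow_small hD (by simp [i0]) u]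
  ring

lemma pairL_E1_left (h1 : 1 < 2*n) {μ : ℝ} {v₀ w₀ : G n}
    {D : Matrix (Fin (2*n)) (Fin (2*n)) ℝ} (hw : inA w₀) (hD : DinA D) (z : G n) :
    inn ((Lm μ v₀ w₀ D).mulVec (E n 1)) z = μ * z (i1 h1) + inn v₀ z := by
  have h : E n (1:ℕ) = E n ((i1 h1 : Fin (2*n)) : ℕ) := rfl
  rw [pair_Lm h1]
  rw [show (E n ((1:ℕ)) : G n) (i1 h1) = 1 from E1_at_i1 h1]
  rw [show inn w₀ (E n (1:ℕ)) = w₀ (i1 h1) from by rw [h, dotE]]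
  rw [hw (i1 h1) (by simp [i1]), D_mulVec_E1 hD h1]
  rw [show inn (0 : G n) z = 0 from by rw [inn_eq, zero_dotProduct]]
  ring

lemma sum_S1 (h1 : 1 < 2*n) (L : Matrix (Fin (2*n)) (Fin (2*n)) ℝ) (w : G n) :
    ∑ i : Fin (2*n), Fq L (E n (i:ℕ)) (E n (i:ℕ)) w
      = -2 * (L.mulVec w (i0 h1)) + 2 * w (i0 h1) * Matrix.trace L := by
  have key : ∀ i : Fin (2*n), Fq L (E n (i:ℕ)) (E n (i:ℕ)) w
      = (if i = i0 h1 then -2 * (L.mulVec w i) else 0) + 2 * w (i0 h1) * L i i := by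
    intro i
    rw [Fq_expand h1]
    rw [show (E n ((i:ℕ)) : G n) (i0 h1) = if i0 h1 = i then 1 else 0 from E_apply i (i0 h1)]
    rw [show inn (L.mulVec w) (E n (i:ℕ)) = L.mulVec w i from dotE _ i]
    rw [mulVecE]
    rw [show inn (fun k => L k i) (E n (i:ℕ)) = L i i from dotE _ i]
    by_cases hi : i = i0 h1
    · rw [if_pos hi.symm, if_pos hi]
      subst hi; ring
    · rw [if_neg (fun hc => hi hc.symm), if_neg hi]
      ring
  rw [Finset.sum_congr rfl fun i _ => key i, Finset.sum_add_distrib,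
    Finset.sum_ite_eq' Finset.univ (i0 h1) (fun i => -2 * (L.mulVec w i)),
    if_pos (Finset.mem_univ _), ← Finset.mul_sum]
  rfl

lemma sum_TT (L : Matrix (Fin (2*n)) (Fin (2*n)) ℝ) :
    ∑ i : Fin (2*n), (inn (L.mulVec (E n (i:ℕ))) ((Jm n).mulVec (E n (i:ℕ)))
      + inn (L.mulVec ((Jm n).mulVec (E n (i:ℕ)))) (E n (i:ℕ))) = 0 := by
  have k1 : ∀ i : Fin (2*n), inn (L.mulVec (E n (i:ℕ))) ((Jm n).mulVec (E n (i:ℕ)))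
      = ∑ k, L k i * Jm n k i := by
    intro i; rw [mulVecE, mulVecE]; rfl
  have k2 : ∀ i : Fin (2*n), inn (L.mulVec ((Jm n).mulVec (E n (i:ℕ)))) (E n (i:ℕ))
      = ∑ k, L i k * Jm n k i := by
    intro i; rw [mulVecE, dotE]; rfl
  rw [Finset.sum_congr rfl fun i _ => by rw [k1 i, k2 i]]
  rw [Finset.sum_add_distrib]
  rw [show (∑ i : Fin (2*n), ∑ k : Fin (2*n), L i k * Jm n k i)
      = ∑ k : Fin (2*n), ∑ i : Fin (2*n), L i k * Jm n k i from Finset.sum_comm]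
  rw [← Finset.sum_add_distrib]
  apply Finset.sum_eq_zero; intro x _
  rw [← Finset.sum_add_distrib]
  apply Finset.sum_eq_zero; intro y _
  rw [Jm_anti]
  ring

lemma sum_S2 (h1 : 1 < 2*n) (L : Matrix (Fin (2*n)) (Fin (2*n)) ℝ) (z : G n) :
    ∑ i : Fin (2*n), Fq L (E n (i:ℕ)) z ((Jm n).mulVec (E n (i:ℕ)))
      = -2 * inn (L.mulVec (E n 1)) z
        - z (i0 h1) * (∑ i : Fin (2*n), (inn (L.mulVec (E n (i:ℕ))) ((Jm n).mulVec (E n (i:ℕ)))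
            + inn (L.mulVec ((Jm n).mulVec (E n (i:ℕ)))) (E n (i:ℕ)))) := by
  have e0 : E n (0:ℕ) = E n ((i0 h1 : Fin (2*n)) : ℕ) := rfl
  have e1 : E n (1:ℕ) = E n ((i1 h1 : Fin (2*n)) : ℕ) := rfl
  have key : ∀ i : Fin (2*n), Fq L (E n (i:ℕ)) z ((Jm n).mulVec (E n (i:ℕ)))
      = (if i = i0 h1 then
          inn (L.mulVec z) ((Jm n).mulVec (E n (i:ℕ)))
            - inn (L.mulVec ((Jm n).mulVec (E n (i:ℕ)))) z
         else 0)
        + (if i = i1 h1 then - (L.mulVec z i) - inn (L.mulVec (E n (i:ℕ))) z else 0)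
        - z (i0 h1) * (inn (L.mulVec (E n (i:ℕ))) ((Jm n).mulVec (E n (i:ℕ)))
            + inn (L.mulVec ((Jm n).mulVec (E n (i:ℕ)))) (E n (i:ℕ))) := by
    intro i
    rw [Fq_expand h1]
    rw [show (E n ((i:ℕ)) : G n) (i0 h1) = if i0 h1 = i then 1 else 0 from E_apply i (i0 h1)]
    rw [show ((Jm n).mulVec (E n (i:ℕ))) (i0 h1) = Jm n (i0 h1) i from by rw [mulVecE]]
    rw [show Jm n (i0 h1) i = -(if i = i1 h1 then (1:ℝ) else 0) from ?_]
    rw [show inn (L.mulVec z) (E n (i:ℕ)) = L.mulVec z i from dotE _ i]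
    · by_cases hi : i = i0 h1
      · have hi' : ¬ (i = i1 h1) := by
          rw [hi]; intro hc
          have := congrArg Fin.val hc
          simp [i0, i1] at this
        rw [if_pos hi.symm, if_pos hi, if_neg hi', if_neg hi']
        ring
      · by_cases hi1 : i = i1 h1
        · rw [if_neg (fun hc => hi hc.symm), if_neg hi, if_pos hi1, if_pos hi1]
          ring
        · rw [if_neg (fun hc => hi hc.symm), if_neg hi, if_neg hi1, if_neg hi1]
          ring
    · -- Jm n (i0 h1) i = -(if i = i1 h1 then 1 else 0)
      have r0 : ((i0 h1 : Fin (2*n)) : ℕ) = 0 := rfl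
      by_cases hi1 : i = i1 h1
      · subst hi1
        simp only [Jm, Matrix.of_apply, r0, if_pos]
        norm_num [i1]
      · have : (i:ℕ) ≠ 1 := by
          intro hc; exact hi1 (by rw [Fin.ext_iff, hc]; rfl)
        simp only [Jm, Matrix.of_apply, r0]
        rw [if_neg (fun hc => by omega), if_neg (fun hc => this (by omega)), if_neg hi1]
        norm_num
  rw [Finset.sum_congr rfl fun i _ => key i]
  rw [Finset.sum_sub_distrib, Finset.sum_add_distrib]
  rw [Finset.sum_ite_eq' Finset.univ (i0 h1)
    (fun i => inn (L.mulVec z) ((Jm n).mulVec (E n (i:ℕ)))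
      - inn (L.mulVec ((Jm n).mulVec (E n (i:ℕ)))) z), if_pos (Finset.mem_univ _)]
  rw [Finset.sum_ite_eq' Finset.univ (i1 h1)
    (fun i => - (L.mulVec z i) - inn (L.mulVec (E n (i:ℕ))) z), if_pos (Finset.mem_univ _)]
  rw [← Finset.mul_sum]
  rw [show (Jm n).mulVec (E n (((i0 h1 : Fin (2*n))):ℕ)) = E n 1 from by
    rw [← e0]; exact J_col0 h1]
  rw [show inn (L.mulVec z) (E n 1) = L.mulVec z (i1 h1) from by rw [e1, dotE]]
  rw [show inn (L.mulVec (E n (((i1 h1 : Fin (2*n))):ℕ))) z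
      = inn (L.mulVec (E n 1)) z from by rw [← e1]]
  ring

lemma deltaOm_eq (h1 : 1 < 2*n) {μ : ℝ} {v₀ w₀ : G n}
    {D : Matrix (Fin (2*n)) (Fin (2*n)) ℝ} {nabla : G n → G n → G n}
    (hK : Koszul (Lm μ v₀ w₀ D) nabla) (hv : inA v₀) (hw : inA w₀) (hD : DinA D) (z : G n) :
    deltaOm nabla z = Matrix.trace D * z (i1 h1) - inn v₀ z := by
  rw [deltaOm]
  have step : (∑ i : Fin (2*n), nablaOm nabla (E n (i:ℕ)) (E n (i:ℕ)) z)
      = ∑ i : Fin (2*n), (Fq (Lm μ v₀ w₀ D) (E n (i:ℕ)) (E n (i:ℕ)) ((Jm n).mulVec z)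
          - Fq (Lm μ v₀ w₀ D) (E n (i:ℕ)) z ((Jm n).mulVec (E n (i:ℕ)))) / 2 :=
    Finset.sum_congr rfl fun i _ => nablaOm_Fq hK (E n (i:ℕ)) (E n (i:ℕ)) z
  rw [step]
  rw [show (∑ i : Fin (2*n), (Fq (Lm μ v₀ w₀ D) (E n (i:ℕ)) (E n (i:ℕ)) ((Jm n).mulVec z)
      - Fq (Lm μ v₀ w₀ D) (E n (i:ℕ)) z ((Jm n).mulVec (E n (i:ℕ)))) / 2)
    = ((∑ i : Fin (2*n), Fq (Lm μ v₀ w₀ D) (E n (i:ℕ)) (E n (i:ℕ)) ((Jm n).mulVec z))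
      - (∑ i : Fin (2*n), Fq (Lm μ v₀ w₀ D) (E n (i:ℕ)) z ((Jm n).mulVec (E n (i:ℕ))))) / 2
    from by rw [← Finset.sum_sub_distrib, Finset.sum_div]]
  rw [sum_S1 h1, sum_S2 h1, sum_TT]
  rw [Lrow0 h1 hv hD, J_app0 h1, pairL_E1_left h1 hw hD,
    trace_Lm h1 μ v₀ w₀ D (hv (i1 h1) (by simp [i1])) (hw (i1 h1) (by simp [i1]))]
  ring


lemma mulVec_neg' (M : Matrix (Fin (2*n)) (Fin (2*n)) ℝ) (v : G n) :
    M.mulVec (-v) = -(M.mulVec v) := by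
  rw [show -v = (-1:ℝ) • v from by funext i; simp, Matrix.mulVec_smul]
  funext i; simp

lemma inn_neg_right (u v : G n) : inn u (-v) = -(inn u v) := by
  rw [inn_eq, inn_eq, dotProduct_neg]

lemma inn_neg_left (u v : G n) : inn (-u) v = -(inn u v) := by
  rw [inn_eq, inn_eq, neg_dotProduct]

lemma inn_zero_left (v : G n) : inn (0 : G n) v = 0 := by
  rw [inn_eq, zero_dotProduct]

lemma inn_zero_right (v : G n) : inn v (0 : G n) = 0 := by
  rw [inn_eq, dotProduct_zero]

lemma inn_self_zero {u : G n} (h : inn u u = 0) : u = 0 := by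
  have h' : ∀ i ∈ Finset.univ, u i * u i = 0 := by
    rw [inn] at h
    intro i hi
    have := (Finset.sum_eq_zero_iff_of_nonneg (fun j _ => mul_self_nonneg (u j))).1 h i hi
    exact this
  funext i
  exact mul_self_eq_zero.1 (h' i (Finset.mem_univ i))

lemma E0_at_i0 (h1 : 1 < 2*n) : E n 0 (i0 h1) = 1 := by simp [E, i0]
lemma E0_at_i1 (h1 : 1 < 2*n) : E n 0 (i1 h1) = 0 := by simp [E, i1]

lemma dot_E1' (h1 : 1 < 2*n) (u : G n) : inn u (E n 1) = u (i1 h1) := by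
  have h : E n (1:ℕ) = E n ((i1 h1 : Fin (2*n)) : ℕ) := rfl
  rw [h, dotE]

lemma pair_transpose (M : Matrix (Fin (2*n)) (Fin (2*n)) ℝ) (a b : G n) :
    inn (Mᵀ.mulVec a) b = inn (M.mulVec b) a := by
  rw [inn_eq, inn_eq, dotProduct_comm, Matrix.dotProduct_mulVec,
    ← Matrix.mulVec_transpose, Matrix.transpose_transpose, dotProduct_comm]

lemma pair_skew (D : Matrix (Fin (2*n)) (Fin (2*n)) ℝ) (a b : G n) :
    inn ((skewPart D).mulVec a) b = (1/2) * (inn (D.mulVec a) b - inn (D.mulVec b) a) := by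
  rw [skewPart, Matrix.smul_mulVec, Matrix.sub_mulVec]
  rw [inn_eq, smul_dotProduct, sub_dotProduct, ← inn_eq, ← inn_eq,
    pair_transpose]
  simp only [smul_eq_mul]

lemma skew_DinA {D : Matrix (Fin (2*n)) (Fin (2*n)) ℝ} (hD : DinA D) :
    DinA (skewPart D) := by
  intro k l hkl
  simp only [skewPart, Matrix.smul_apply, Matrix.sub_apply, Matrix.transpose_apply,
    smul_eq_mul]
  rw [hD k l hkl, hD l k (Or.symm hkl)]
  ring

lemma DinA_mulVec_E0 {D : Matrix (Fin (2*n)) (Fin (2*n)) ℝ} (hD : DinA D) (h1 : 1 < 2*n) :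
    D.mulVec (E n 0) = 0 := by
  have h : E n (0:ℕ) = E n ((i0 h1 : Fin (2*n)) : ℕ) := rfl
  rw [h, mulVecE]
  funext k
  exact hD k (i0 h1) (Or.inr (by simp [i0]))

lemma pair_Ia (h1 : 1 < 2*n) (u v : G n) :
    inn ((Ia n).mulVec u) v = inn u v - u (i0 h1) * v (i0 h1) - u (i1 h1) * v (i1 h1) := by
  have hcomp : ∀ k : Fin (2*n), (Ia n).mulVec u k = if 2 ≤ (k:ℕ) then u k else 0 := by
    intro k
    rw [Matrix.mulVec, dotProduct, Finset.sum_eq_single k]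
    · simp only [Ia, Matrix.of_apply]
      by_cases hk : 2 ≤ (k:ℕ)
      · simp [hk]
      · simp [hk]
    · intro b _ hb
      simp only [Ia, Matrix.of_apply]
      rw [if_neg (fun hc => hb hc.1.symm), zero_mul]
    · simp
  rw [inn, Finset.sum_congr rfl fun k _ => by rw [hcomp k]]
  have key : ∀ k : Fin (2*n), (if 2 ≤ (k:ℕ) then u k else 0) * v k
      = u k * v k - (if k = i0 h1 then u k * v k else 0)
        - (if k = i1 h1 then u k * v k else 0) := by
    intro k
    have e0 : ((i0 h1):ℕ) = 0 := rfl
    have e1 : ((i1 h1):ℕ) = 1 := rfl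
    by_cases hk : 2 ≤ (k:ℕ)
    · rw [if_pos hk, if_neg (fun hc => by rw [hc] at hk; omega),
        if_neg (fun hc => by rw [hc] at hk; omega)]
      ring
    · rw [if_neg hk]
      rcases (by omega : (k:ℕ) = 0 ∨ (k:ℕ) = 1) with h | h
      · rw [if_pos (by rw [Fin.ext_iff, h, e0]), if_neg (by rw [Fin.ext_iff, h, e1]; omega)]
        ring
      · rw [if_neg (by rw [Fin.ext_iff, h, e0]; omega), if_pos (by rw [Fin.ext_iff, h, e1])]
        ring
  rw [Finset.sum_congr rfl fun k _ => key k, Finset.sum_sub_distrib, Finset.sum_sub_distrib,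
    Finset.sum_ite_eq' Finset.univ (i0 h1) (fun k => u k * v k), if_pos (Finset.mem_univ _),
    Finset.sum_ite_eq' Finset.univ (i1 h1) (fun k => u k * v k), if_pos (Finset.mem_univ _)]
  rfl


lemma E0dot (h1 : 1 < 2*n) (x : G n) : inn (E n 0) x = x (i0 h1) := by
  have h : E n (0:ℕ) = E n ((i0 h1 : Fin (2*n)) : ℕ) := rfl
  rw [h, Edot]

lemma E1dot (h1 : 1 < 2*n) (x : G n) : inn (E n 1) x = x (i1 h1) := by
  have h : E n (1:ℕ) = E n ((i1 h1 : Fin (2*n)) : ℕ) := rfl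
  rw [h, Edot]

end AuxLemmas

/-- `n ≥ 3`: the structure is in class `W₄`, i.e.
`(∇_xω)(y,z) = −U(x,y,z)/(2(n−1))`, iff `v₀ = 0`, `w₀ = 0`,
`D_s = (Tr D/(2(n−1)))·Id_a` and `D_a J' = J' D_a`. -/
theorem statement12 (n : ℕ) (hn : 3 ≤ n) (μ : ℝ) (v₀ w₀ : G n) (hv : inA v₀) (hw : inA w₀)
    (D : Matrix (Fin (2*n)) (Fin (2*n)) ℝ) (hD : DinA D)
    (nabla : G n → G n → G n) (hK : Koszul (Lm μ v₀ w₀ D) nabla) :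
    (∀ x y z : G n,
        nablaOm nabla x y z = -(1/(2*((n : ℝ) - 1))) * Uten nabla x y z)
      ↔ (v₀ = 0 ∧ w₀ = 0
          ∧ symPart D = (Matrix.trace D / (2*((n : ℝ) - 1))) • Ia n
          ∧ (∀ x : G n, inA x → (skewPart D).mulVec ((Jm n).mulVec x) = (Jm n).mulVec ((skewPart D).mulVec x))) := by
  have h1 : 1 < 2*n := by omega
  have hn3 : (3:ℝ) ≤ (n:ℝ) := by exact_mod_cast hn
  have hne : ((n:ℝ) - 1) ≠ 0 := by linarith
  constructor
  · intro hP
    set t : ℝ := Matrix.trace D with ht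
    have hi0v : ((i0 h1 : Fin (2*n)):ℕ) < 2 := by simp [i0]
    have hi1v : ((i1 h1 : Fin (2*n)):ℕ) < 2 := by simp [i1]
    have instA : ∀ z : G n, inA z →
        inn w₀ z + inn v₀ z = (2*(1/(2*((n:ℝ)-1)))) * inn v₀ z := by
      intro z hz
      have h := hP (E n 1) (E n 1) z
      rw [nablaOm_Fq hK, Uten, Fq_expand h1, Fq_expand h1] at h
      simp only [pair_Lm h1, deltaOm_eq h1 hK hv hw hD, J_app0 h1, J_app1 h1, J_col0 h1,
        J_col1 h1, E0_at_i0 h1, E0_at_i1 h1, E1_at_i0 h1, E1_at_i1 h1, dot_E1' h1,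
        dot_E0 h1, E0dot h1, E1dot h1, inn_neg_left, inn_neg_right, mulVec_neg',
        Pi.neg_apply, D_mulVec_E1 hD h1, DinA_mulVec_E0 hD h1,
        Drow_small hD hi0v, Drow_small hD hi1v, inn_zero_left, inn_zero_right,
        hz (i0 h1) hi0v, hz (i1 h1) hi1v, hv (i0 h1) hi0v, hv (i1 h1) hi1v,
        hw (i0 h1) hi0v, hw (i1 h1) hi1v, neg_zero, mul_zero, zero_mul, mul_one, one_mul,
        add_zero, zero_add, sub_zero, zero_sub, neg_neg, mul_neg, neg_mul, zero_div] at h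
      linear_combination 2 * h
    have instB : ∀ z : G n, inA z →
        inn v₀ z - inn w₀ z = (2*(1/(2*((n:ℝ)-1)))) * inn v₀ z := by
      intro z hz
      have h := hP (E n 0) (E n 0) z
      rw [nablaOm_Fq hK, Uten, Fq_expand h1, Fq_expand h1] at h
      simp only [pair_Lm h1, deltaOm_eq h1 hK hv hw hD, J_app0 h1, J_app1 h1, J_col0 h1,
        J_col1 h1, E0_at_i0 h1, E0_at_i1 h1, E1_at_i0 h1, E1_at_i1 h1, dot_E1' h1,
        dot_E0 h1, E0dot h1, E1dot h1, inn_neg_left, inn_neg_right, mulVec_neg',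
        Pi.neg_apply, D_mulVec_E1 hD h1, DinA_mulVec_E0 hD h1,
        Drow_small hD hi0v, Drow_small hD hi1v, inn_zero_left, inn_zero_right,
        hz (i0 h1) hi0v, hz (i1 h1) hi1v, hv (i0 h1) hi0v, hv (i1 h1) hi1v,
        hw (i0 h1) hi0v, hw (i1 h1) hi1v, neg_zero, mul_zero, zero_mul, mul_one, one_mul,
        add_zero, zero_add, sub_zero, zero_sub, neg_neg, mul_neg, neg_mul, zero_div] at h
      linear_combination 2 * h
    have instC : ∀ x z : G n, inA x → inA z →
        inn (D.mulVec x) z + inn (D.mulVec z) x = (2*t*(1/(2*((n:ℝ)-1)))) * inn x z := by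
      intro x z hx hz
      have h := hP x (E n 1) z
      rw [nablaOm_Fq hK, Uten, Fq_expand h1, Fq_expand h1] at h
      simp only [pair_Lm h1, deltaOm_eq h1 hK hv hw hD, J_app0 h1, J_app1 h1, J_col0 h1,
        J_col1 h1, E0_at_i0 h1, E0_at_i1 h1, E1_at_i0 h1, E1_at_i1 h1, dot_E1' h1,
        dot_E0 h1, E0dot h1, E1dot h1, inn_neg_left, inn_neg_right, mulVec_neg',
        Pi.neg_apply, D_mulVec_E1 hD h1, DinA_mulVec_E0 hD h1,
        Drow_small hD hi0v, Drow_small hD hi1v, inn_zero_left, inn_zero_right,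
        hz (i0 h1) hi0v, hz (i1 h1) hi1v, hx (i0 h1) hi0v, hx (i1 h1) hi1v,
        hv (i0 h1) hi0v, hv (i1 h1) hi1v,
        hw (i0 h1) hi0v, hw (i1 h1) hi1v, neg_zero, mul_zero, zero_mul, mul_one, one_mul,
        add_zero, zero_add, sub_zero, zero_sub, neg_neg, mul_neg, neg_mul, zero_div] at h
      rw [← ht] at h
      linear_combination 2 * h
    have instD : ∀ y z : G n, inA y → inA z →
        inn (D.mulVec y) ((Jm n).mulVec z) - inn (D.mulVec ((Jm n).mulVec z)) y
          + inn (D.mulVec ((Jm n).mulVec y)) z - inn (D.mulVec z) ((Jm n).mulVec y) = 0 := by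
      intro y z hy hz
      have h := hP (E n 0) y z
      rw [nablaOm_Fq hK, Uten, Fq_expand h1, Fq_expand h1] at h
      simp only [pair_Lm h1, deltaOm_eq h1 hK hv hw hD, J_app0 h1, J_app1 h1, J_col0 h1,
        J_col1 h1, E0_at_i0 h1, E0_at_i1 h1, E1_at_i0 h1, E1_at_i1 h1, dot_E1' h1,
        dot_E0 h1, E0dot h1, E1dot h1, inn_neg_left, inn_neg_right, mulVec_neg',
        Pi.neg_apply, D_mulVec_E1 hD h1, DinA_mulVec_E0 hD h1,
        Drow_small hD hi0v, Drow_small hD hi1v, inn_zero_left, inn_zero_right,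
        hz (i0 h1) hi0v, hz (i1 h1) hi1v, hy (i0 h1) hi0v, hy (i1 h1) hi1v,
        hv (i0 h1) hi0v, hv (i1 h1) hi1v,
        hw (i0 h1) hi0v, hw (i1 h1) hi1v, neg_zero, mul_zero, zero_mul, mul_one, one_mul,
        add_zero, zero_add, sub_zero, zero_sub, neg_neg, mul_neg, neg_mul, zero_div] at h
      linear_combination 2 * h
    have hwz : ∀ z : G n, inA z → inn w₀ z = 0 := by
      intro z hz
      linarith [instA z hz, instB z hz]
    have hw0 : w₀ = 0 := inn_self_zero (hwz w₀ hw)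
    have hvz : ∀ z : G n, inA z → inn v₀ z = 0 := by
      intro z hz
      have hA := instA z hz
      rw [hwz z hz, zero_add] at hA
      have h2 : inn v₀ z * (2*((n:ℝ)-1) - 2) = 0 := by
        field_simp at hA
        linear_combination 2 * hA
      rcases mul_eq_zero.1 h2 with h | h
      · exact h
      · exfalso; nlinarith
    have hv0 : v₀ = 0 := inn_self_zero (hvz v₀ hv)
    refine ⟨hv0, hw0, ?_, ?_⟩
    · ext k l
      have entry : ∀ k' l' : Fin (2*n), 2 ≤ (k':ℕ) → 2 ≤ (l':ℕ) →
          D k' l' + D l' k' = 2*t*(1/(2*((n:ℝ)-1))) * (if k' = l' then 1 else 0) := by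
        intro k' l' hk' hl'
        have hEk : inA (E n (k':ℕ)) := by
          intro i hi
          simp only [E]
          rw [if_neg (by omega)]
        have hEl : inA (E n (l':ℕ)) := by
          intro i hi
          simp only [E]
          rw [if_neg (by omega)]
        have h := instC (E n (l':ℕ)) (E n (k':ℕ)) hEl hEk
        rw [mulVecE D l', mulVecE D k'] at h
        rw [show inn (fun k'' => D k'' l') (E n (k':ℕ)) = D k' l' from dotE _ k'] at h
        rw [show inn (fun k'' => D k'' k') (E n (l':ℕ)) = D l' k' from dotE _ l'] at h
        rw [show inn (E n ((l':ℕ))) (E n (k':ℕ)) = E n (l':ℕ) k' from dotE _ k'] at h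
        rw [E_apply l' k'] at h
        exact h
      simp only [symPart, Matrix.smul_apply, Matrix.add_apply, Matrix.transpose_apply,
        smul_eq_mul, Ia, Matrix.of_apply]
      by_cases hk2 : 2 ≤ (k:ℕ)
      · by_cases hl2 : 2 ≤ (l:ℕ)
        · have h := entry k l hk2 hl2
          by_cases hkl : k = l
          · rw [if_pos hkl] at h
            rw [if_pos ⟨hkl, hk2⟩]
            linear_combination (1/2) * h
          · rw [if_neg hkl] at h
            rw [if_neg (fun hc => hkl hc.1)]
            linarith
        · rw [hD k l (Or.inr (by omega)), hD l k (Or.inl (by omega)),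
            if_neg (fun hc => hl2 (by rw [← hc.1]; exact hc.2))]
          ring
      · rw [hD k l (Or.inl (by omega)), hD l k (Or.inr (by omega)),
          if_neg (fun hc => hk2 hc.2)]
        ring
    · intro x hx
      have hKA : DinA (skewPart D) := skew_DinA hD
      set u : G n := (skewPart D).mulVec ((Jm n).mulVec x)
        - (Jm n).mulVec ((skewPart D).mulVec x) with hu
      suffices hu0 : u = 0 by
        rw [hu, sub_eq_zero] at hu0
        exact hu0
      apply inn_self_zero
      have hua : inA u := by
        intro i hi
        rcases (by omega : (i:ℕ) = 0 ∨ (i:ℕ) = 1) with h | h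
        · have hii : i = i0 h1 := by rw [Fin.ext_iff, h]; rfl
          subst hii
          rw [hu, Pi.sub_apply, Drow_small hKA hi0v, J_app0 h1,
            Drow_small hKA hi1v, neg_zero, sub_zero]
        · have hii : i = i1 h1 := by rw [Fin.ext_iff, h]; rfl
          subst hii
          rw [hu, Pi.sub_apply, Drow_small hKA hi1v, J_app1 h1,
            Drow_small hKA hi0v, sub_zero]
      have hD4 := instD x u hx hua
      have split : inn u u = inn ((skewPart D).mulVec ((Jm n).mulVec x)) u
          - inn ((Jm n).mulVec ((skewPart D).mulVec x)) u := by
        rw [hu]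
        rw [inn_eq, sub_dotProduct, ← inn_eq, ← inn_eq]
      rw [split, pair_skew D ((Jm n).mulVec x) u, innJ_swap, pair_skew D x ((Jm n).mulVec u)]
      linarith
  · rintro ⟨hv0, hw0, hs, hcom⟩
    subst hv0; subst hw0
    set t : ℝ := Matrix.trace D with ht
    have hDDT : ∀ u v : G n, inn (D.mulVec u) v + inn (D.mulVec v) u
        = ((2*t)/(2*((n:ℝ)-1))) * (inn u v - u (i0 h1) * v (i0 h1) - u (i1 h1) * v (i1 h1)) := by
      intro u v
      have e : D + Dᵀ = ((2*t)/(2*((n:ℝ)-1))) • Ia n := by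
        have e2 : (2:ℝ) • symPart D = (2:ℝ) • ((t / (2*((n : ℝ) - 1))) • Ia n) := by
          rw [hs]
        rw [symPart, smul_smul, smul_smul] at e2
        rw [show ((2:ℝ) * (1/2)) = 1 from by norm_num, one_smul] at e2
        rw [e2]
        congr 1
        ring
      have e3 : inn ((D + Dᵀ).mulVec u) v = inn (D.mulVec u) v + inn (D.mulVec v) u := by
        rw [Matrix.add_mulVec, inn_eq, add_dotProduct, ← inn_eq, ← inn_eq,
          pair_transpose]
      rw [← e3, e, Matrix.smul_mulVec, inn_eq, smul_dotProduct, ← inn_eq,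
        pair_Ia h1]
      simp only [smul_eq_mul]
    have hKc : ∀ w : G n, (skewPart D).mulVec ((Jm n).mulVec w)
        = (Jm n).mulVec ((skewPart D).mulVec w) := by
      intro w
      have hw0 : (skewPart D).mulVec (E n 0) = 0 := DinA_mulVec_E0 (skew_DinA hD) h1
      have hw1 : (skewPart D).mulVec (E n 1) = 0 := D_mulVec_E1 (skew_DinA hD) h1
      set wa : G n := w - (w (i0 h1) • E n 0 + w (i1 h1) • E n 1) with hwa
      have hina : inA wa := by
        intro i hi
        have e0 : ((i0 h1):ℕ) = 0 := rfl
        have e1 : ((i1 h1):ℕ) = 1 := rfl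
        rcases (by omega : (i:ℕ) = 0 ∨ (i:ℕ) = 1) with h | h
        · have : i = i0 h1 := by rw [Fin.ext_iff, h, e0]
          subst this
          simp [hwa, E0_at_i0 h1, E1_at_i0 h1]
        · have : i = i1 h1 := by rw [Fin.ext_iff, h, e1]
          subst this
          simp [hwa, E0_at_i1 h1, E1_at_i1 h1]
      have hdec : w = wa + (w (i0 h1) • E n 0 + w (i1 h1) • E n 1) := by
        rw [hwa]; abel
      rw [hdec]
      simp only [Matrix.mulVec_add, Matrix.mulVec_smul, J_col0 h1, J_col1 h1, hw0, hw1,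
        mulVec_neg', Matrix.mulVec_zero, smul_zero, add_zero, zero_add, neg_zero, smul_neg,
        hcom wa hina]
    have hH2 : ∀ a b : G n,
        inn (D.mulVec a) ((Jm n).mulVec b) - inn (D.mulVec ((Jm n).mulVec b)) a
          + inn (D.mulVec ((Jm n).mulVec a)) b - inn (D.mulVec b) ((Jm n).mulVec a) = 0 := by
      intro a b
      have k1 : inn ((skewPart D).mulVec a) ((Jm n).mulVec b)
          = (1/2) * (inn (D.mulVec a) ((Jm n).mulVec b) - inn (D.mulVec ((Jm n).mulVec b)) a) :=
        pair_skew D a ((Jm n).mulVec b)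
      have k2 : inn ((skewPart D).mulVec ((Jm n).mulVec a)) b
          = (1/2) * (inn (D.mulVec ((Jm n).mulVec a)) b - inn (D.mulVec b) ((Jm n).mulVec a)) :=
        pair_skew D ((Jm n).mulVec a) b
      have k3 : inn ((skewPart D).mulVec ((Jm n).mulVec a)) b
          = - inn ((skewPart D).mulVec a) ((Jm n).mulVec b) := by
        rw [hKc a, innJ_swap]
      linarith
    intro x y z
    rw [nablaOm_Fq hK, Uten, Fq_expand h1, Fq_expand h1]
    simp only [pair_Lm h1, deltaOm_eq h1 hK hv hw hD, inn_zero_left, J_app0 h1, J_app1 h1]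
    have hA := hDDT x ((Jm n).mulVec z)
    have hC := hDDT x ((Jm n).mulVec y)
    simp only [J_app0 h1, J_app1 h1] at hA hC
    have hB := hDDT x y
    have hE := hDDT x z
    have hH := hH2 y z
    linear_combination (x (i0 h1)/2) * hH + (-(y (i0 h1))/2) * hA + (-(z (i1 h1))/2) * hB
      + ((z (i0 h1))/2) * hC + ((y (i1 h1))/2) * hE
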